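/- Consider drawing balls uniformly at random with replacement from an urn with n labelled balls. The expected number of draws until the first repeated ball (first draw of a previously drawn ball) is √(πn/2) + Θ(1) as n → ∞; more precisely, it equals ∑_{k=0}^{n} n!/((n−k)!·n^k) and this quantity is asymptotic to √(πn/2). -/

import Mathlib

open Finset Filter
open Set Real MeasureTheory

private lemma nonneg_of_deriv_nonneg (F F' : ℝ → ℝ) (h0 : F 0 = 0)
    (hd : ∀ u, 0 ≤ u → HasDerivAt F (F' u) u)
    (hpos : ∀ u, 0 ≤ u → 0 ≤ F' u) : ∀ u, 0 ≤ u → 0 ≤ F u := by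
  intro u hu
  have hmono : MonotoneOn F (Ici (0:ℝ)) := by
    apply monotoneOn_of_deriv_nonneg (convex_Ici 0)
    · exact fun x hx => ((hd x hx).continuousAt).continuousWithinAt
    · intro x hx
      rw [interior_Ici] at hx
      exact ((hd x (le_of_lt hx)).differentiableAt).differentiableWithinAt
    · intro x hx
      rw [interior_Ici] at hx
      rw [(hd x (le_of_lt hx)).deriv]
      exact hpos x (le_of_lt hx)
  have := hmono (self_mem_Ici) (by exact hu : u ∈ Ici (0:ℝ)) hu
  linarith [this, h0.symm ▸ this]

private lemma log_deriv_aux (u : ℝ) (hu : 0 ≤ u) :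
    HasDerivAt (fun v => Real.log (1 + v)) (1 + u)⁻¹ u := by
  have h : (1:ℝ) + u ≠ 0 := by positivity
  have := (Real.hasDerivAt_log h).comp u ((hasDerivAt_id u).const_add 1)
  simp only [mul_one] at this; exact this

private lemma log_ge_quad (u : ℝ) (hu : 0 ≤ u) :
    u - u^2/2 ≤ Real.log (1 + u) := by
  have := nonneg_of_deriv_nonneg (fun v => Real.log (1+v) - (v - v^2/2))
      (fun v => (1+v)⁻¹ - (1 - v)) (by simp)
      (fun v hv => ((log_deriv_aux v hv).sub
        (((hasDerivAt_id v).sub (((hasDerivAt_pow 2 v).div_const 2))).congr_deriv (by ring))))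
      (fun v hv => by
        have h1 : (0:ℝ) < 1 + v := by positivity
        rw [sub_nonneg, ← sub_nonneg]
        have : (1+v)⁻¹ - (1-v) = v^2/(1+v) := by field_simp; ring
        rw [this]; positivity) u hu
  linarith

private lemma log_le_cubic (u : ℝ) (hu : 0 ≤ u) :
    Real.log (1 + u) ≤ u - u^2/2 + u^3/3 := by
  have := nonneg_of_deriv_nonneg (fun v => (v - v^2/2 + v^3/3) - Real.log (1+v))
      (fun v => (1 - v + v^2) - (1+v)⁻¹) (by simp)
      (fun v hv => by
        have h1 := log_deriv_aux v hv
        have h2 : HasDerivAt (fun w : ℝ => w - w^2/2 + w^3/3) (1 - v + v^2) v := by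
          have := ((hasDerivAt_id v).sub ((hasDerivAt_pow 2 v).div_const 2)).add
            ((hasDerivAt_pow 3 v).div_const 3)
          exact this.congr_deriv (by push_cast; ring)
        exact h2.sub h1)
      (fun v hv => by
        have h1 : (0:ℝ) < 1 + v := by positivity
        rw [sub_nonneg]
        rw [inv_le_iff_one_le_mul₀ h1]
        nlinarith [pow_nonneg hv 3]) u hu
  linarith

private lemma log_le_quad (u : ℝ) (hu : 0 ≤ u) :
    2*(1+u) * Real.log (1 + u) ≤ 2*u + u^2 := by
  have key := nonneg_of_deriv_nonneg
      (fun v => (2*v + v^2) * (2*(1+v))⁻¹ - Real.log (1+v))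
      (fun v => ((2 + 2*v) * (2*(1+v))⁻¹ + (2*v + v^2) * (-(2) / (2*(1+v))^2)) - (1+v)⁻¹)
      (by simp)
      (fun v hv => by
        have h1 : (2:ℝ)*(1+v) ≠ 0 := by positivity
        have h2 : HasDerivAt (fun w : ℝ => 2*w + w^2) (2 + 2*v) v := by
          have := ((hasDerivAt_id v).const_mul 2).add (hasDerivAt_pow 2 v)
          exact this.congr_deriv (by push_cast; ring)
        have h3 : HasDerivAt (fun w : ℝ => (2*(1+w))⁻¹) (-(2) / (2*(1+v))^2) v := by
          have hb : HasDerivAt (fun w : ℝ => 2*(1+w)) 2 v := by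
            have := ((hasDerivAt_id v).const_add 1).const_mul 2
            exact this.congr_deriv (by ring)
          exact hb.inv h1
        exact (h2.mul h3).sub (log_deriv_aux v hv))
      (fun v hv => by
        have h1 : (0:ℝ) < 1 + v := by positivity
        rw [sub_nonneg]
        have heq : (2 + 2*v) * (2*(1+v))⁻¹ + (2*v + v^2) * (-(2) / (2*(1+v))^2)
            = 1 - (2*v + v^2)/(2*(1+v)^2) := by field_simp; ring
        have heq2 : (1:ℝ) - (2*v + v^2)/(2*(1+v)^2) - (1+v)⁻¹ = v^2/(2*(1+v)^2) := by
          field_simp; ring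
        rw [heq, ← sub_nonneg] at *
        rw [heq2]
        positivity)
  have h := key u hu
  have h1 : (0:ℝ) < 1 + u := by positivity
  rw [sub_nonneg] at h
  calc 2*(1+u) * Real.log (1+u) ≤ 2*(1+u) * ((2*u + u^2) * (2*(1+u))⁻¹) :=
        mul_le_mul_of_nonneg_left h (by positivity)
    _ = 2*u + u^2 := by field_simp

private lemma integrable_pow_exp (k : ℕ) :
    IntegrableOn (fun x : ℝ => Real.exp (-x) * x ^ k) (Ioi 0) := by
  have h := Real.GammaIntegral_convergent (s := k + 1) (by positivity)
  apply h.congr_fun ?_ measurableSet_Ioi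
  intro x hx
  simp [add_sub_cancel_right, Real.rpow_natCast]

private lemma integral_pow_exp (k : ℕ) :
    ∫ x in Ioi (0:ℝ), Real.exp (-x) * x ^ k = k.factorial := by
  have h := Real.Gamma_eq_integral (s := k + 1) (by positivity)
  rw [Real.Gamma_nat_eq_factorial] at h
  rw [h]
  apply setIntegral_congr_fun measurableSet_Ioi
  intro x hx
  simp [add_sub_cancel_right, Real.rpow_natCast]

private lemma sum_eq_integral (n : ℕ) (hn : 0 < n) :
    ∑ t ∈ Finset.range (n + 1), (n.factorial : ℝ) / ((n - t).factorial * (n : ℝ) ^ t)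
      = ∫ x in Ioi (0:ℝ), Real.exp (-x) * (1 + x / n) ^ n := by
  have hn' : (n:ℝ) ≠ 0 := Nat.cast_ne_zero.mpr hn.ne'
  have hexp : ∀ x : ℝ, Real.exp (-x) * (1 + x / n) ^ n
      = ∑ k ∈ Finset.range (n + 1),
          ((n.choose k : ℝ) / (n:ℝ)^k) * (Real.exp (-x) * x ^ k) := by
    intro x
    rw [add_comm (1:ℝ) (x/n), add_pow]
    rw [Finset.mul_sum]
    apply Finset.sum_congr rfl
    intro k hk
    rw [div_pow]
    ring
  simp_rw [hexp]
  rw [integral_finset_sum]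
  · apply Finset.sum_congr rfl
    intro k hk
    rw [Finset.mem_range, Nat.lt_succ_iff] at hk
    rw [integral_const_mul, integral_pow_exp]
    have hc : (n.choose k : ℝ) * k.factorial = n.factorial / (n - k).factorial := by
      have := Nat.choose_mul_factorial_mul_factorial hk
      have h2 : ((n.choose k : ℝ)) * k.factorial * (n-k).factorial = n.factorial := by
        exact_mod_cast this
      field_simp
      linarith [h2]
    rw [div_mul_eq_mul_div, hc]
    rw [div_div]
  · intro k hk
    exact (integrable_pow_exp k).const_mul _


private noncomputable def Fb (n : ℕ) (y : ℝ) : ℝ :=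
  Real.exp (-(Real.sqrt n * y)) * (1 + y / Real.sqrt n) ^ n

private lemma subst_lemma (n : ℕ) (hn : 0 < n) :
    (∫ x in Ioi (0:ℝ), Real.exp (-x) * (1 + x / n) ^ n)
      = Real.sqrt n * ∫ y in Ioi (0:ℝ), Fb n y := by
  have hs0 : (0:ℝ) < Real.sqrt n := Real.sqrt_pos.mpr (by exact_mod_cast hn)
  have hss : Real.sqrt n * Real.sqrt n = (n:ℝ) :=
    Real.mul_self_sqrt (Nat.cast_nonneg n)
  have h := integral_comp_mul_left_Ioi
      (fun x => Real.exp (-x) * (1 + x / n) ^ n) 0 hs0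
  rw [mul_zero] at h
  have heq : ∀ y : ℝ, Real.exp (-(Real.sqrt n * y)) * (1 + Real.sqrt n * y / n) ^ n
      = Fb n y := by
    intro y
    unfold Fb
    have hd : Real.sqrt n * y / n = y / Real.sqrt n := by
      rw [div_eq_div_iff (by positivity : ((n:ℝ)) ≠ 0) hs0.ne']
      linear_combination y * hss
    rw [hd]
  simp only [smul_eq_mul] at h
  rw [show (∫ y in Ioi (0:ℝ), Fb n y)
      = ∫ x in Ioi (0:ℝ), Real.exp (-(Real.sqrt n * x)) * (1 + Real.sqrt n * x / n) ^ n by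
    exact setIntegral_congr_fun measurableSet_Ioi fun y _ => (heq y).symm]
  rw [h]
  field_simp

private lemma exp_form (n : ℕ) (y : ℝ) (hy : 0 < y) (hn : 0 < n) :
    Fb n y = Real.exp ((n:ℝ) * Real.log (1 + y / Real.sqrt n) - Real.sqrt n * y) := by
  have hs0 : (0:ℝ) < Real.sqrt n := Real.sqrt_pos.mpr (by exact_mod_cast hn)
  have h1 : (0:ℝ) < 1 + y / Real.sqrt n := by positivity
  unfold Fb
  rw [← Real.exp_log h1, ← Real.exp_nat_mul, ← Real.exp_add, Real.exp_log h1]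
  congr 1
  ring

-- key exponent bounds
private lemma exponent_bounds (n : ℕ) (hn : 1 ≤ n) (y : ℝ) (hy : 0 < y) :
    ((n:ℝ) * Real.log (1 + y / Real.sqrt n) - Real.sqrt n * y ≤ (1 - y)/4)
    ∧ (-y^2/2 ≤ (n:ℝ) * Real.log (1 + y / Real.sqrt n) - Real.sqrt n * y)
    ∧ ((n:ℝ) * Real.log (1 + y / Real.sqrt n) - Real.sqrt n * y
        ≤ -y^2/2 + y^3/(3 * Real.sqrt n)) := by
  set s := Real.sqrt n with hs
  have hs1 : (1:ℝ) ≤ s := by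
    rw [hs, show (1:ℝ) = Real.sqrt 1 by simp]
    exact Real.sqrt_le_sqrt (by exact_mod_cast hn)
  have hs0 : (0:ℝ) < s := lt_of_lt_of_le one_pos hs1
  have hss : s * s = (n:ℝ) := Real.mul_self_sqrt (Nat.cast_nonneg n)
  set u := y / s with hu
  have hu0 : 0 < u := div_pos hy hs0
  have hsu : s * u = y := by rw [hu]; field_simp
  have hnu : (n:ℝ) * u = s * y := by rw [← hss]; nlinarith [hsu]
  have hnu2 : (n:ℝ) * u^2 = y^2 := by rw [← hss]; nlinarith [hsu]
  have hnu3 : (n:ℝ) * u^3 = y^3 / s := by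
    have hcube : (s*u)^3 = y^3 := by rw [hsu]
    rw [← hss, eq_div_iff hs0.ne']
    linear_combination hcube
  have h1u : (0:ℝ) < 1 + u := by positivity
  have huy : u ≤ y := by
    rw [hu, div_le_iff₀ hs0]; nlinarith [hy]
  set L := Real.log (1 + u) with hL
  refine ⟨?_, ?_, ?_⟩
  · -- uniform bound
    have hq := log_le_quad u hu0.le
    have step1 : (n:ℝ) * L ≤ (2*(s*y) + y^2)/(2*(1+u)) := by
      rw [le_div_iff₀ (by positivity)]
      calc (n:ℝ) * L * (2*(1+u)) = (n:ℝ) * (2*(1+u) * L) := by ring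
        _ ≤ (n:ℝ) * (2*u + u^2) :=
            mul_le_mul_of_nonneg_left hq (Nat.cast_nonneg n)
        _ = 2*((n:ℝ)*u) + (n:ℝ)*u^2 := by ring
        _ = 2*(s*y) + y^2 := by rw [hnu, hnu2]
    have step2 : (2*(s*y) + y^2)/(2*(1+u)) ≤ s*y + (1-y)/4 := by
      rw [div_le_iff₀ (by positivity)]
      have hy2 : s*y*u = y^2 := by nlinarith [hsu]
      rcases le_total y 1 with hc | hc
      · nlinarith [mul_nonneg hu0.le hy.le, mul_nonneg (mul_nonneg hs0.le hy.le) hu0.le]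
      · nlinarith [mul_nonneg hu0.le hy.le, huy]
    linarith
  · -- lower bound
    have hq := log_ge_quad u hu0.le
    have : (n:ℝ) * (u - u^2/2) ≤ (n:ℝ) * L :=
      mul_le_mul_of_nonneg_left hq (Nat.cast_nonneg n)
    have hexp : (n:ℝ) * (u - u^2/2) = s*y - y^2/2 := by
      have : (n:ℝ) * (u - u^2/2) = (n:ℝ)*u - ((n:ℝ)*u^2)/2 := by ring
      rw [this, hnu, hnu2]
    linarith
  · -- upper bound
    have hq := log_le_cubic u hu0.le
    have : (n:ℝ) * L ≤ (n:ℝ) * (u - u^2/2 + u^3/3) :=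
      mul_le_mul_of_nonneg_left hq (Nat.cast_nonneg n)
    have hexp : (n:ℝ) * (u - u^2/2 + u^3/3) = s*y - y^2/2 + (y^3/s)/3 := by
      have h2 : (n:ℝ) * (u - u^2/2 + u^3/3)
          = (n:ℝ)*u - ((n:ℝ)*u^2)/2 + ((n:ℝ)*u^3)/3 := by ring
      rw [h2, hnu, hnu2, hnu3]
    have h3 : (y^3/s)/3 = y^3/(3*s) := by ring
    linarith [hexp ▸ this, h3 ▸ le_refl ((y^3/s)/3)]

private lemma sqrt_nat_tendsto : Tendsto (fun n : ℕ => Real.sqrt n) atTop atTop := by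
  have h := (tendsto_rpow_atTop (show (0:ℝ) < 1/2 by norm_num)).comp
    (tendsto_natCast_atTop_atTop (R := ℝ))
  refine h.congr fun n => ?_
  rw [Function.comp_apply, Real.sqrt_eq_rpow]

private lemma gauss_int : ∫ y in Ioi (0:ℝ), Real.exp (-y^2/2) = Real.sqrt (Real.pi/2) := by
  have h := integral_gaussian_Ioi (1/2)
  have heq : ∀ y : ℝ, Real.exp (-(1/2) * y^2) = Real.exp (-y^2/2) := by
    intro y; congr 1; ring
  simp_rw [heq] at h
  rw [h]
  rw [show Real.pi / (1/2 : ℝ) = 4 * (Real.pi/2) by ring]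
  rw [Real.sqrt_mul (by norm_num) (Real.pi/2)]
  rw [show (4:ℝ) = 2^2 by norm_num, Real.sqrt_sq (by norm_num)]
  ring

private lemma I_tendsto :
    Tendsto (fun n : ℕ => ∫ y in Ioi (0:ℝ), Fb n y) atTop (nhds (Real.sqrt (Real.pi/2))) := by
  rw [← tendsto_add_atTop_iff_nat 1]
  rw [← gauss_int]
  apply tendsto_integral_of_dominated_convergence
      (bound := fun y => Real.exp ((1 - y)/4))
  · -- measurability
    intro m
    apply Continuous.aestronglyMeasurable
    unfold Fb
    have hs0 : (0:ℝ) < Real.sqrt (m+1 : ℕ) := Real.sqrt_pos.mpr (by positivity)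
    fun_prop
  · -- bound integrable
    have h : Integrable (fun y : ℝ => Real.exp (1/4) * Real.exp (-(1/4) * y))
        (volume.restrict (Ioi 0)) :=
      ((exp_neg_integrableOn_Ioi 0 (by norm_num : (0:ℝ) < 1/4)).const_mul _)
    apply h.congr
    filter_upwards with y
    rw [← Real.exp_add]; congr 1; ring
  · -- domination
    intro m
    filter_upwards [ae_restrict_mem measurableSet_Ioi] with y hy
    have hy0 : (0:ℝ) < y := hy
    have hm : 1 ≤ m + 1 := le_add_self
    rw [exp_form (m+1) y hy0 (Nat.succ_pos m)]
    rw [Real.norm_eq_abs, abs_of_nonneg (Real.exp_nonneg _)]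
    exact Real.exp_le_exp.mpr (exponent_bounds (m+1) hm y hy0).1
  · -- pointwise limit
    filter_upwards [ae_restrict_mem measurableSet_Ioi] with y hy
    have hy0 : (0:ℝ) < y := hy
    have hE : Tendsto
        (fun n : ℕ => (n:ℝ) * Real.log (1 + y / Real.sqrt n) - Real.sqrt n * y)
        atTop (nhds (-y^2/2)) := by
      have hupper : Tendsto (fun n : ℕ => -y^2/2 + y^3/(3 * Real.sqrt n)) atTop
          (nhds (-y^2/2)) := by
        have h3 : Tendsto (fun n : ℕ => y^3/(3 * Real.sqrt n)) atTop (nhds 0) :=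
          Tendsto.div_atTop tendsto_const_nhds
            (Tendsto.const_mul_atTop (by norm_num : (0:ℝ) < 3) sqrt_nat_tendsto)
        have := (tendsto_const_nhds (x := -y^2/2) (f := atTop (α := ℕ))).add h3
        simpa using this
      refine tendsto_of_tendsto_of_tendsto_of_le_of_le'
        (tendsto_const_nhds : Tendsto (fun _ : ℕ => -y^2/2) atTop _) hupper ?_ ?_
      · filter_upwards [eventually_ge_atTop 1] with n hn
        exact (exponent_bounds n hn y hy0).2.1
      · filter_upwards [eventually_ge_atTop 1] with n hn
        exact (exponent_bounds n hn y hy0).2.2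
    have hF : Tendsto (fun n : ℕ => Fb n y) atTop (nhds (Real.exp (-y^2/2))) := by
      have hcomp := (Real.continuous_exp.continuousAt (x := -y^2/2)).tendsto.comp hE
      apply hcomp.congr'
      filter_upwards [eventually_ge_atTop 1] with n hn
      exact (exp_form n y hy0 hn).symm
    exact hF.comp (tendsto_add_atTop_nat 1)

theorem stmt18 :
    Tendsto
      (fun n : ℕ =>
        (∑ t ∈ Finset.range (n + 1),
            (n.factorial : ℝ) / ((n - t).factorial * (n : ℝ) ^ t)) /
          Real.sqrt (Real.pi * n / 2))
      atTop (nhds 1) := by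
  have hne : Real.sqrt (Real.pi/2) ≠ 0 := by
    have := Real.pi_pos; positivity
  have hT : Tendsto (fun n : ℕ => (∫ y in Ioi (0:ℝ), Fb n y) / Real.sqrt (Real.pi/2))
      atTop (nhds 1) := by
    have := I_tendsto.div_const (Real.sqrt (Real.pi/2))
    rwa [div_self hne] at this
  apply hT.congr'
  filter_upwards [eventually_ge_atTop 1] with n hn
  have hn0 : 0 < n := hn
  have hs0 : (0:ℝ) < Real.sqrt n := Real.sqrt_pos.mpr (by exact_mod_cast hn0)
  rw [sum_eq_integral n hn0, subst_lemma n hn0]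
  rw [show Real.pi * n / 2 = (n:ℝ) * (Real.pi/2) by ring,
    Real.sqrt_mul (Nat.cast_nonneg n)]
  rw [mul_div_mul_left _ _ hs0.ne']
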